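/- Let K'/K be a finite Galois extension of fields. Let V and W be K-vector spaces equipped with a linear action of a group G, and suppose every nonzero G-equivariant K'-linear endomorphism space Hom_{K'[G]}(V ⊗_K K', W ⊗_K K') is one-dimensional over K'. Then for any nonzero G-equivariant K'-linear map f : V ⊗_K K' → W ⊗_K K', there exists a scalar c ∈ (K')^× such that cf is invariant under the natural semilinear Galois action and hence descends to a G-equivariant K-linear map V → W. -/

import Mathlib

set_option maxHeartbeats 1000000

open TensorProduct

section Aux

variable {K K' : Type*} [Field K] [Field K'] [Algebra K K']
variable {V W : Type*} [AddCommGroup V] [Module K V] [AddCommGroup W] [Module K W]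

lemma rTensor_smul_semilinear (σ : K' ≃ₐ[K] K') (a : K') (x : K' ⊗[K] V) :
    LinearMap.rTensor V σ.toLinearMap (a • x) = σ a • LinearMap.rTensor V σ.toLinearMap x := by
  induction x using TensorProduct.induction_on with
  | zero => simp
  | tmul b v => simp [smul_tmul', smul_eq_mul, map_mul]
  | add x y hx hy => simp [smul_add, hx, hy]

/-- The Galois twist of a `K'`-linear map on base-changed modules. -/
noncomputable def conjMap (σ : K' ≃ₐ[K] K') (f : K' ⊗[K] V →ₗ[K'] K' ⊗[K] W) :
    K' ⊗[K] V →ₗ[K'] K' ⊗[K] W where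
  toFun x := LinearMap.rTensor W σ.toLinearMap (f (LinearMap.rTensor V σ.symm.toLinearMap x))
  map_add' x y := by simp
  map_smul' a x := by
    simp only [RingHom.id_apply]
    rw [rTensor_smul_semilinear σ.symm a x, map_smul, rTensor_smul_semilinear,
      AlgEquiv.apply_symm_apply]

lemma conjMap_apply (σ : K' ≃ₐ[K] K') (f : K' ⊗[K] V →ₗ[K'] K' ⊗[K] W) (x : K' ⊗[K] V) :
    conjMap σ f x = LinearMap.rTensor W σ.toLinearMap
      (f (LinearMap.rTensor V σ.symm.toLinearMap x)) := rfl

lemma toLinearMap_trans (σ τ : K' ≃ₐ[K] K') :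
    (τ.trans σ).toLinearMap = σ.toLinearMap ∘ₗ τ.toLinearMap := by
  ext x; simp

lemma conjMap_conjMap (σ τ : K' ≃ₐ[K] K') (f : K' ⊗[K] V →ₗ[K'] K' ⊗[K] W) :
    conjMap σ (conjMap τ f) = conjMap (τ.trans σ) f := by
  refine LinearMap.ext fun x => ?_
  simp only [conjMap_apply]
  rw [show (τ.trans σ).symm = σ.symm.trans τ.symm from rfl,
    ← LinearMap.rTensor_comp_apply, ← LinearMap.rTensor_comp_apply,
    ← toLinearMap_trans σ τ, ← toLinearMap_trans τ.symm σ.symm]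

lemma conjMap_refl (f : K' ⊗[K] V →ₗ[K'] K' ⊗[K] W) :
    conjMap (AlgEquiv.refl) f = f := by
  refine LinearMap.ext fun x => ?_
  have h1 : (AlgEquiv.refl : K' ≃ₐ[K] K').toLinearMap = LinearMap.id := by ext; simp
  simp [conjMap_apply, h1]

lemma conjMap_smul (σ : K' ≃ₐ[K] K') (a : K') (f : K' ⊗[K] V →ₗ[K'] K' ⊗[K] W) :
    conjMap σ (a • f) = σ a • conjMap σ f := by
  refine LinearMap.ext fun x => ?_
  simp only [conjMap_apply, LinearMap.smul_apply]
  rw [rTensor_smul_semilinear]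

lemma rTensor_baseChange (σ : K' ≃ₐ[K] K') (m : V →ₗ[K] W) (x : K' ⊗[K] V) :
    LinearMap.rTensor W σ.toLinearMap (LinearMap.baseChange K' m x)
      = LinearMap.baseChange K' m (LinearMap.rTensor V σ.toLinearMap x) := by
  induction x using TensorProduct.induction_on with
  | zero => simp
  | tmul b v => simp
  | add x y hx hy => simp [hx, hy]

end Aux

theorem galois_descent_of_equivariant_map
    (K K' : Type*) [Field K] [Field K'] [Algebra K K']
    [IsGalois K K'] [FiniteDimensional K K']
    (G : Type*) [Group G]
    (V W : Type*) [AddCommGroup V] [Module K V] [AddCommGroup W] [Module K W]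
    (ρV : Representation K G V) (ρW : Representation K G W)
    (hone : ∀ f₁ f₂ : K' ⊗[K] V →ₗ[K'] K' ⊗[K] W,
      (∀ g : G, f₁ ∘ₗ LinearMap.baseChange K' (ρV g) = LinearMap.baseChange K' (ρW g) ∘ₗ f₁) →
      (∀ g : G, f₂ ∘ₗ LinearMap.baseChange K' (ρV g) = LinearMap.baseChange K' (ρW g) ∘ₗ f₂) →
      f₁ ≠ 0 → ∃ a : K', f₂ = a • f₁)
    (f : K' ⊗[K] V →ₗ[K'] K' ⊗[K] W)
    (hf : ∀ g : G, f ∘ₗ LinearMap.baseChange K' (ρV g) = LinearMap.baseChange K' (ρW g) ∘ₗ f)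
    (hf0 : f ≠ 0) :
    ∃ c : K'ˣ,
      (∀ σ : K' ≃ₐ[K] K',
        LinearMap.rTensor W σ.toLinearMap ∘ₗ (((c : K') • f).restrictScalars K)
          = (((c : K') • f).restrictScalars K) ∘ₗ LinearMap.rTensor V σ.toLinearMap)
      ∧ ∃ g : V →ₗ[K] W, (∀ γ : G, g ∘ₗ ρV γ = ρW γ ∘ₗ g) ∧
          (c : K') • f = LinearMap.baseChange K' g := by
  classical
  have hconj_equiv : ∀ (σ : K' ≃ₐ[K] K') (h : K' ⊗[K] V →ₗ[K'] K' ⊗[K] W),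
      (∀ g : G, h ∘ₗ LinearMap.baseChange K' (ρV g) = LinearMap.baseChange K' (ρW g) ∘ₗ h) →
      (∀ g : G, conjMap σ h ∘ₗ LinearMap.baseChange K' (ρV g)
        = LinearMap.baseChange K' (ρW g) ∘ₗ conjMap σ h) := by
    intro σ h hh g
    refine LinearMap.ext fun x => ?_
    simp only [LinearMap.comp_apply, conjMap_apply]
    rw [rTensor_baseChange σ.symm (ρV g) x]
    have hx := congrArg (fun m => m (LinearMap.rTensor V σ.symm.toLinearMap x)) (hh g)
    simp only [LinearMap.comp_apply] at hx
    rw [hx, rTensor_baseChange]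
  have hcancel : ∀ (a b : K'), a • f = b • f → a = b := by
    intro a b hab
    by_contra hne
    have h : (a - b) • f = 0 := by
      have hs : (a - b) • f = a • f - b • f := sub_smul a b f
      rw [hs, hab]; exact sub_self (b • f)
    apply hf0
    have h2 := congrArg (fun m => (a - b)⁻¹ • m) h
    simpa [smul_smul, inv_mul_cancel₀ (sub_ne_zero.mpr hne)] using h2
  have hc : ∀ σ : K' ≃ₐ[K] K', ∃ a : K', conjMap σ f = a • f := fun σ =>
    hone f (conjMap σ f) hf (hconj_equiv σ f hf) hf0
  choose c hcs using hc
  have hconj0 : ∀ σ : K' ≃ₐ[K] K', conjMap σ f ≠ 0 := by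
    intro σ h0
    apply hf0
    have h1 : conjMap σ.symm (conjMap σ f) = f := by
      rw [conjMap_conjMap, show σ.trans σ.symm = AlgEquiv.refl from AlgEquiv.ext fun y => σ.symm_apply_apply y, conjMap_refl]
    rw [h0] at h1
    rw [← h1]
    refine LinearMap.ext fun x => ?_
    simp [conjMap_apply]
  have hc0 : ∀ σ : K' ≃ₐ[K] K', c σ ≠ 0 := by
    intro σ h0
    apply hconj0 σ
    rw [hcs σ, h0, zero_smul]
  have hcocycle : ∀ σ τ : K' ≃ₐ[K] K', c (σ * τ) = σ (c τ) * c σ := by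
    intro σ τ
    apply hcancel
    rw [← hcs (σ * τ)]
    have hmul : (σ * τ : K' ≃ₐ[K] K') = τ.trans σ := rfl
    rw [hmul, ← conjMap_conjMap, hcs τ, conjMap_smul, hcs σ, smul_smul]
  set cu : (K' ≃ₐ[K] K') → K'ˣ := fun σ => Units.mk0 (c σ) (hc0 σ) with hcu
  have hcocu : groupCohomology.IsMulCocycle₁ cu := by
    intro σ τ
    ext
    simp only [hcu, Units.val_mul, Units.val_mk0, AlgEquiv.smul_units_def, Units.coe_map,
      MonoidHom.coe_coe]
    exact hcocycle σ τ
  obtain ⟨β, hβ⟩ := groupCohomology.isMulCoboundary₁_of_isMulCocycle₁_of_aut_to_units cu hcocu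
  have hinv : ∀ σ : K' ≃ₐ[K] K',
      conjMap σ (((β⁻¹ : K'ˣ) : K') • f) = ((β⁻¹ : K'ˣ) : K') • f := by
    intro σ
    rw [conjMap_smul, hcs σ]
    have hval : c σ = σ (β : K') * ((β : K')⁻¹) := by
      have h := congrArg Units.val (hβ σ)
      simp only [hcu, AlgEquiv.smul_units_def, Units.val_div_eq_div_val, Units.coe_map,
        MonoidHom.coe_coe, Units.val_mk0] at h
      rw [← h, div_eq_mul_inv]
    rw [smul_smul, hval]
    congr 1
    have hβ0 : (β : K') ≠ 0 := β.ne_zero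
    rw [Units.val_inv_eq_inv_val]
    field_simp
    rw [← map_mul, one_div, inv_mul_cancel₀ hβ0, map_one]
  have hcomm : ∀ σ : K' ≃ₐ[K] K',
      LinearMap.rTensor W σ.toLinearMap ∘ₗ ((((β⁻¹ : K'ˣ) : K') • f).restrictScalars K)
        = ((((β⁻¹ : K'ˣ) : K') • f).restrictScalars K) ∘ₗ LinearMap.rTensor V σ.toLinearMap := by
    intro σ
    refine LinearMap.ext fun x => ?_
    have h := congrArg (fun m => m (LinearMap.rTensor V σ.toLinearMap x)) (hinv σ)
    simp only [conjMap_apply] at h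
    have hcanc2 : LinearMap.rTensor V σ.symm.toLinearMap (LinearMap.rTensor V σ.toLinearMap x)
        = x := by
      rw [← LinearMap.rTensor_comp_apply]
      have hid : σ.symm.toLinearMap ∘ₗ σ.toLinearMap = LinearMap.id := by ext; simp
      rw [hid, LinearMap.rTensor_id, LinearMap.id_apply]
    rw [hcanc2] at h
    simpa using h
  set F : K' ⊗[K] V →ₗ[K'] K' ⊗[K] W := ((β⁻¹ : K'ˣ) : K') • f with hF
  have hFequiv : ∀ γ : G,
      F ∘ₗ LinearMap.baseChange K' (ρV γ) = LinearMap.baseChange K' (ρW γ) ∘ₗ F := by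
    intro γ
    rw [hF, LinearMap.smul_comp, hf γ, LinearMap.comp_smul]
  set b := Module.Basis.ofVectorSpace K W with hb
  set Ψ : K' ⊗[K] W ≃ₗ[K] (Module.Basis.ofVectorSpaceIndex K W →₀ K') :=
    (LinearEquiv.lTensor K' b.repr).trans
      (finsuppScalarRight K K K' (Module.Basis.ofVectorSpaceIndex K W)) with hΨ
  have hΨtmul : ∀ (a : K') (w : W) (i : Module.Basis.ofVectorSpaceIndex K W),
      Ψ (a ⊗ₜ[K] w) i = b.repr w i • a := by
    intro a w i
    simp [hΨ, finsuppScalarRight_apply_tmul_apply]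
  have hΨσ : ∀ (σ : K' ≃ₐ[K] K') (x : K' ⊗[K] W) (i : Module.Basis.ofVectorSpaceIndex K W),
      Ψ (LinearMap.rTensor W σ.toLinearMap x) i = σ (Ψ x i) := by
    intro σ x i
    induction x using TensorProduct.induction_on with
    | zero => simp
    | tmul a w =>
        rw [LinearMap.rTensor_tmul, hΨtmul, hΨtmul]
        simp only [AlgEquiv.toLinearMap_apply]
        rw [Algebra.smul_def, Algebra.smul_def, map_mul, AlgEquiv.commutes]
    | add x y hx hy => simp [hx, hy]
  have hinj : Function.Injective (fun w : W => (1 : K') ⊗ₜ[K] w) := by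
    intro w₁ w₂ h
    have h2 : ∀ i, algebraMap K K' (b.repr w₁ i) = algebraMap K K' (b.repr w₂ i) := by
      intro i
      have h3 := congrArg (fun x => Ψ x i) h
      simpa [hΨtmul, Algebra.smul_def] using h3
    have h3 : b.repr w₁ = b.repr w₂ := by
      ext i
      exact (algebraMap K K').injective (h2 i)
    exact b.repr.injective h3
  have hfix : ∀ x : K', (∀ σ : K' ≃ₐ[K] K', σ x = x) → ∃ k : K, algebraMap K K' k = x := by
    intro x hx
    have htop : IntermediateField.fixedField (⊤ : Subgroup (K' ≃ₐ[K] K')) = ⊥ := by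
      have h := (IsGalois.tfae (F := K) (E := K')).out 0 1
      exact h.mp inferInstance
    have hmem : x ∈ IntermediateField.fixedField (⊤ : Subgroup (K' ≃ₐ[K] K')) := fun g => hx g
    rw [htop] at hmem
    exact IntermediateField.mem_bot.mp hmem
  set r : K' → K := Function.invFun (algebraMap K K') with hr
  have hr_alg : ∀ k : K, r (algebraMap K K' k) = k := fun k =>
    Function.leftInverse_invFun ((algebraMap K K').injective) k
  have hr0 : r 0 = 0 := by
    have h := hr_alg 0
    rwa [map_zero] at h
  have hFfix : ∀ (v : V) (σ : K' ≃ₐ[K] K'),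
      LinearMap.rTensor W σ.toLinearMap (F ((1 : K') ⊗ₜ[K] v)) = F ((1 : K') ⊗ₜ[K] v) := by
    intro v σ
    have h := congrArg (fun m => m ((1 : K') ⊗ₜ[K] v)) (hcomm σ)
    simp only [LinearMap.comp_apply, LinearMap.restrictScalars_apply, LinearMap.rTensor_tmul,
      AlgEquiv.toLinearMap_apply, map_one] at h
    exact h
  have hcoeff : ∀ (v : V) (i : Module.Basis.ofVectorSpaceIndex K W), ∃ k : K,
      algebraMap K K' k = Ψ (F ((1 : K') ⊗ₜ[K] v)) i := by
    intro v i
    apply hfix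
    intro σ
    rw [← hΨσ σ, hFfix v σ]
  set g₀ : V → W := fun v =>
    b.repr.symm (Finsupp.mapRange r hr0 (Ψ (F ((1 : K') ⊗ₜ[K] v)))) with hg₀
  have hkey : ∀ v : V, (1 : K') ⊗ₜ[K] g₀ v = F ((1 : K') ⊗ₜ[K] v) := by
    intro v
    apply Ψ.injective
    ext i
    rw [hΨtmul]
    have hrepr : b.repr (g₀ v) = Finsupp.mapRange r hr0 (Ψ (F ((1 : K') ⊗ₜ[K] v))) := by
      simp [hg₀]
    rw [hrepr]
    simp only [Finsupp.mapRange_apply]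
    obtain ⟨k, hk⟩ := hcoeff v i
    rw [← hk, hr_alg, Algebra.smul_def, mul_one]
  have hadd : ∀ v₁ v₂ : V, g₀ (v₁ + v₂) = g₀ v₁ + g₀ v₂ := by
    intro v₁ v₂
    apply hinj
    simp only
    rw [TensorProduct.tmul_add, hkey, hkey, hkey, TensorProduct.tmul_add, ← map_add,
      ← TensorProduct.tmul_add]
  have hsmul : ∀ (k : K) (v : V), g₀ (k • v) = k • g₀ v := by
    intro k v
    apply hinj
    simp only
    rw [hkey, TensorProduct.tmul_smul, TensorProduct.tmul_smul,
      LinearMap.map_smul_of_tower, hkey]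
  set g : V →ₗ[K] W :=
    { toFun := g₀, map_add' := hadd, map_smul' := hsmul } with hg
  have hgv : ∀ v : V, g v = g₀ v := fun v => rfl
  have hbc : F = LinearMap.baseChange K' g := by
    apply LinearMap.ext
    intro x
    induction x using TensorProduct.induction_on with
    | zero => simp
    | tmul a v =>
        have h1 : a ⊗ₜ[K] v = a • ((1 : K') ⊗ₜ[K] v) := by
          rw [smul_tmul', smul_eq_mul, mul_one]
        rw [h1, map_smul, map_smul, LinearMap.baseChange_tmul]
        exact congrArg (fun z => a • z) (hkey v).symm
    | add x y hx hy => rw [map_add, map_add, hx, hy]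
  have hgequiv : ∀ γ : G, g ∘ₗ ρV γ = ρW γ ∘ₗ g := by
    intro γ
    apply LinearMap.ext
    intro v
    apply hinj
    simp only [LinearMap.comp_apply]
    rw [hgv, hkey (ρV γ v)]
    have h1 : (1 : K') ⊗ₜ[K] (ρV γ v) = LinearMap.baseChange K' (ρV γ) ((1 : K') ⊗ₜ[K] v) := by
      rw [LinearMap.baseChange_tmul]
    rw [h1]
    have h2 := congrArg (fun m => m ((1 : K') ⊗ₜ[K] v)) (hFequiv γ)
    simp only [LinearMap.comp_apply] at h2
    rw [h2, ← hkey v, LinearMap.baseChange_tmul, hgv]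
  exact ⟨β⁻¹, hcomm, g, hgequiv, hbc⟩
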